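/- Fix constants h₀ > 0 and c > 0. The function h(x,t) = h₀ exp( c h₀ x (e^t − 1) + t ), defined for x > 0 and t ≥ 0, satisfies the integral equation h(x,t) = h₀ + ∫₀^t [ c (h*h)(x,s) + h(x,s) ] ds, where (h*h)(x,s) = ∫₀^x h(x−y,s) h(y,s) dy is the convolution in the mass variable. -/

import Mathlib

theorem explicit_supersolution (h₀ c : ℝ) (hh₀ : 0 < h₀) (hc : 0 < c)
    (h : ℝ → ℝ → ℝ)
    (hdef : ∀ x t, h x t = h₀ * Real.exp (c * h₀ * x * (Real.exp t - 1) + t)) :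
    ∀ x > (0:ℝ), ∀ t ≥ (0:ℝ),
      h x t = h₀ + ∫ s in (0:ℝ)..t,
        (c * ∫ y in (0:ℝ)..x, h (x - y) s * h y s) + h x s := by
  intro x hx t ht
  have hconv : ∀ s : ℝ, (∫ y in (0:ℝ)..x, h (x - y) s * h y s)
      = x * (h₀ ^ 2 * Real.exp (c * h₀ * x * (Real.exp s - 1) + 2 * s)) := by
    intro s
    have hpt : ∀ y : ℝ, h (x - y) s * h y s
        = h₀ ^ 2 * Real.exp (c * h₀ * x * (Real.exp s - 1) + 2 * s) := by
      intro y
      rw [hdef, hdef]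
      rw [show h₀ * Real.exp (c * h₀ * (x - y) * (Real.exp s - 1) + s) *
          (h₀ * Real.exp (c * h₀ * y * (Real.exp s - 1) + s))
          = h₀ ^ 2 * (Real.exp (c * h₀ * (x - y) * (Real.exp s - 1) + s) *
            Real.exp (c * h₀ * y * (Real.exp s - 1) + s)) by ring]
      rw [← Real.exp_add]
      ring_nf
    simp only [hpt, intervalIntegral.integral_const, smul_eq_mul, sub_zero]
  have hF : ∀ s : ℝ, HasDerivAt (fun u => h₀ * Real.exp (c * h₀ * x * (Real.exp u - 1) + u))
      ((c * (x * (h₀ ^ 2 * Real.exp (c * h₀ * x * (Real.exp s - 1) + 2 * s))))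
        + h₀ * Real.exp (c * h₀ * x * (Real.exp s - 1) + s)) s := by
    intro s
    have hg : HasDerivAt (fun u => c * h₀ * x * (Real.exp u - 1) + u)
        (c * h₀ * x * Real.exp s + 1) s := by
      have := ((Real.hasDerivAt_exp s).sub_const 1).const_mul (c * h₀ * x)
      exact this.add (hasDerivAt_id s)
    have := (hg.exp).const_mul h₀
    refine this.congr_deriv (Eq.symm ?_)
    rw [show c * h₀ * x * (Real.exp s - 1) + 2 * s
        = (c * h₀ * x * (Real.exp s - 1) + s) + s by ring, Real.exp_add]
    ring
  have hcont : Continuous (fun s => (c * (x * (h₀ ^ 2 * Real.exp (c * h₀ * x * (Real.exp s - 1) + 2 * s))))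
      + h₀ * Real.exp (c * h₀ * x * (Real.exp s - 1) + s)) := by
    fun_prop
  have key : (∫ s in (0:ℝ)..t,
      (c * (x * (h₀ ^ 2 * Real.exp (c * h₀ * x * (Real.exp s - 1) + 2 * s))))
        + h₀ * Real.exp (c * h₀ * x * (Real.exp s - 1) + s))
      = h₀ * Real.exp (c * h₀ * x * (Real.exp t - 1) + t)
        - h₀ * Real.exp (c * h₀ * x * (Real.exp (0:ℝ) - 1) + 0) := by
    exact intervalIntegral.integral_eq_sub_of_hasDerivAt (fun s _ => hF s)
      (hcont.intervalIntegrable 0 t)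
  simp only [Real.exp_zero, sub_self, mul_zero, zero_add, mul_one] at key
  have : (∫ s in (0:ℝ)..t, (c * ∫ y in (0:ℝ)..x, h (x - y) s * h y s) + h x s)
      = ∫ s in (0:ℝ)..t,
        (c * (x * (h₀ ^ 2 * Real.exp (c * h₀ * x * (Real.exp s - 1) + 2 * s))))
          + h₀ * Real.exp (c * h₀ * x * (Real.exp s - 1) + s) := by
    apply intervalIntegral.integral_congr
    intro s _
    show (c * ∫ y in (0:ℝ)..x, h (x - y) s * h y s) + h x s = _
    rw [hconv s, hdef]
  rw [this, key, hdef]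
  ring
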